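/- For a degree sequence d = (d_1,...,d_n) with all d_i ≤ m and 2m ≤ n, the number of leaves #C(d) in the recursion tree of the recurrence C(d) = ∑_{S ⊆ {1,...,n-1}, |S| = d_n} C(d/S) satisfies #C(d) ≤ binomial(n,m)^{n-2m} · C_m for some constant C_m depending only on m. -/

import Mathlib

/-- `numLeaves l` is the number of leaves in the recursion tree of the recurrence
`C(d) = ∑_{S ⊆ {1,…,n-1}, |S| = dₙ} C((d₁,…,d_{n-1})/S)`, where the input list `l`
is the degree sequence in non-increasing order, and `d/S` subtracts `1` at the
indices in `S`, removes the zeros and re-sorts in non-increasing order. -/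
def numLeaves : List ℕ → ℕ
  | [] => 1
  | a :: t =>
    let front := (a :: t).dropLast
    ∑ S ∈ (Finset.univ : Finset (Fin front.length)).powersetCard
        ((a :: t).getLast (by simp)),
      numLeaves
        (((List.ofFn fun i => front.get i - if i ∈ S then 1 else 0).filter
            (· ≠ 0)).mergeSort (· ≥ ·))
  termination_by l => l.length
  decreasing_by
    simp only [List.length_mergeSort]
    calc ((List.ofFn fun i => front.get i - if i ∈ S then 1 else 0).filter (· ≠ 0)).length
        ≤ (List.ofFn fun i => front.get i - if i ∈ S then 1 else 0).length :=
          List.length_filter_le _ _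
      _ = front.length := by simp
      _ < (a :: t).length := by
          simp [front, List.length_dropLast]

open Nat Finset

private lemma choose_mono_right {n d m : ℕ} (hdm : d ≤ m) (h : 2 * m ≤ n) :
    Nat.choose n d ≤ Nat.choose n m := by
  induction m, hdm using Nat.le_induction with
  | base => exact le_refl _
  | succ k hk ih =>
    have h2 : 2 * k ≤ n := by omega
    refine (ih h2).trans (Nat.choose_le_succ_of_lt_half_left ?_)
    omega

private lemma choose_le_two_pow (n k : ℕ) : Nat.choose n k ≤ 2 ^ n := by
  rcases le_or_gt k n with h | h
  · calc Nat.choose n k ≤ ∑ i ∈ Finset.range (n + 1), Nat.choose n i :=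
        Finset.single_le_sum (fun i _ => Nat.zero_le _) (Finset.mem_range.mpr (by omega))
      _ = 2 ^ n := Nat.sum_range_choose n
  · simp [Nat.choose_eq_zero_of_lt h]

private lemma child_length_le (a : ℕ) (t : List ℕ)
    (S : Finset (Fin ((a :: t).dropLast.length))) :
    (((List.ofFn fun i => (a :: t).dropLast.get i - if i ∈ S then 1 else 0).filter
        (· ≠ 0)).mergeSort (· ≥ ·)).length ≤ t.length := by
  simp only [List.length_mergeSort]
  calc ((List.ofFn fun i => (a :: t).dropLast.get i - if i ∈ S then 1 else 0).filter
          (· ≠ 0)).length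
      ≤ (List.ofFn fun i => (a :: t).dropLast.get i - if i ∈ S then 1 else 0).length :=
        List.length_filter_le _ _
    _ ≤ t.length := by simp

private lemma child_mem_le {m a : ℕ} {t : List ℕ} (hm : ∀ x ∈ a :: t, x ≤ m)
    (S : Finset (Fin ((a :: t).dropLast.length)))
    {x : ℕ}
    (hx : x ∈ ((List.ofFn fun i => (a :: t).dropLast.get i - if i ∈ S then 1 else 0).filter
        (· ≠ 0)).mergeSort (· ≥ ·)) : x ≤ m := by
  rw [List.mem_mergeSort, List.mem_filter] at hx
  obtain ⟨hx, -⟩ := hx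
  rw [List.mem_ofFn] at hx
  obtain ⟨i, rfl⟩ := hx
  refine le_trans (Nat.sub_le _ _) (hm _ ?_)
  exact List.dropLast_subset _ (List.get_mem _ _)

private lemma numLeaves_le_pow : ∀ (n : ℕ) (l : List ℕ), l.length ≤ n →
    numLeaves l ≤ 2 ^ n ^ 2 := by
  intro n
  induction n with
  | zero =>
    intro l hl
    rw [List.length_eq_zero_iff.mp (Nat.le_zero.mp hl)]
    simp [numLeaves]
  | succ n ih =>
    intro l hl
    match l with
    | [] => simp only [numLeaves]; exact Nat.one_le_two_pow
    | a :: t =>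
      rw [numLeaves]
      have hlen : t.length ≤ n := by simpa using hl
      calc _ ≤ (((Finset.univ : Finset (Fin ((a :: t).dropLast.length))).powersetCard
            ((a :: t).getLast (by simp))).card) • 2 ^ n ^ 2 := by
            refine Finset.sum_le_card_nsmul _ _ _ ?_
            intro S _
            exact ih _ ((child_length_le a t S).trans hlen)
        _ ≤ 2 ^ (a :: t).dropLast.length * 2 ^ n ^ 2 := by
            rw [smul_eq_mul]
            gcongr
            rw [Finset.card_powersetCard]
            simp only [Finset.card_univ, Fintype.card_fin]
            exact _root_.choose_le_two_pow _ _
        _ ≤ 2 ^ n * 2 ^ n ^ 2 := by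
            gcongr
            · norm_num
            · simpa using hlen
        _ ≤ 2 ^ (n + 1) ^ 2 := by
            rw [← pow_add]
            exact Nat.pow_le_pow_right (by norm_num) (by nlinarith)

private lemma numLeaves_main (m : ℕ) : ∀ (n : ℕ) (l : List ℕ), l.length ≤ n →
    (∀ x ∈ l, x ≤ m) →
    numLeaves l ≤ (Nat.choose l.length m) ^ (l.length - 2 * m) * 2 ^ (2 * m) ^ 2 := by
  intro n
  induction n with
  | zero =>
    intro l hl _
    rw [List.length_eq_zero_iff.mp (Nat.le_zero.mp hl)]
    simp only [numLeaves, List.length_nil, Nat.zero_sub, pow_zero, one_mul]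
    exact Nat.one_le_two_pow
  | succ n ih =>
    intro l hl hm
    by_cases hsmall : l.length ≤ 2 * m
    · rw [Nat.sub_eq_zero_of_le hsmall, pow_zero, one_mul]
      calc numLeaves l ≤ 2 ^ l.length ^ 2 := numLeaves_le_pow l.length l le_rfl
        _ ≤ 2 ^ (2 * m) ^ 2 := by
          refine Nat.pow_le_pow_right (by norm_num) ?_
          have : l.length ≤ 2 * m := hsmall
          nlinarith
    · push_neg at hsmall
      match l with
      | [] => simp at hsmall
      | a :: t =>
        have hk : (a :: t).length = t.length + 1 := by simp
        have hkm : 2 * m ≤ t.length := by omega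
        have hmk : m ≤ t.length + 1 := by omega
        have hpos : 0 < Nat.choose (t.length + 1) m := Nat.choose_pos hmk
        rw [numLeaves, hk]
        have hd : (a :: t).getLast (by simp) ≤ m := hm _ (List.getLast_mem _)
        calc _ ≤ (((Finset.univ : Finset (Fin ((a :: t).dropLast.length))).powersetCard
              ((a :: t).getLast (by simp))).card) •
              ((Nat.choose (t.length + 1) m) ^ (t.length - 2 * m) * 2 ^ (2 * m) ^ 2) := by
              refine Finset.sum_le_card_nsmul _ _ _ ?_
              intro S _
              set c := ((List.ofFn fun i => (a :: t).dropLast.get i -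
                  if i ∈ S then 1 else 0).filter (· ≠ 0)).mergeSort (· ≥ ·) with hc
              have hclen : c.length ≤ t.length := child_length_le a t S
              calc numLeaves c ≤ (Nat.choose c.length m) ^ (c.length - 2 * m) * 2 ^ (2 * m) ^ 2 :=
                    ih c (hclen.trans (by omega)) (fun x hx => child_mem_le hm S hx)
                _ ≤ (Nat.choose (t.length + 1) m) ^ (t.length - 2 * m) * 2 ^ (2 * m) ^ 2 := by
                    refine Nat.mul_le_mul_right _ ?_
                    calc (Nat.choose c.length m) ^ (c.length - 2 * m)
                        ≤ (Nat.choose (t.length + 1) m) ^ (c.length - 2 * m) :=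
                          Nat.pow_le_pow_left (Nat.choose_le_choose m (by omega)) _
                      _ ≤ (Nat.choose (t.length + 1) m) ^ (t.length - 2 * m) :=
                          Nat.pow_le_pow_right hpos (by omega)
          _ ≤ Nat.choose (t.length + 1) m *
              ((Nat.choose (t.length + 1) m) ^ (t.length - 2 * m) * 2 ^ (2 * m) ^ 2) := by
              rw [smul_eq_mul]
              gcongr
              rw [Finset.card_powersetCard]
              simp only [Finset.card_univ, Fintype.card_fin]
              calc Nat.choose (a :: t).dropLast.length ((a :: t).getLast (by simp))
                  ≤ Nat.choose (t.length + 1) ((a :: t).getLast (by simp)) :=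
                    Nat.choose_le_choose _ (by simp)
                _ ≤ Nat.choose (t.length + 1) m := choose_mono_right hd (by omega)
          _ = (Nat.choose (t.length + 1) m) ^ (t.length + 1 - 2 * m) * 2 ^ (2 * m) ^ 2 := by
              rw [← mul_assoc, ← _root_.pow_succ']
              congr 2
              omega

theorem stmt_18 (m : ℕ) :
    ∃ C : ℕ, ∀ (n : ℕ) (l : List ℕ), l.length = n →
      l.Pairwise (· ≥ ·) → (∀ x ∈ l, x ≤ m) → 2 * m ≤ n →
        numLeaves l ≤ (Nat.choose n m) ^ (n - 2 * m) * C := by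
  refine ⟨2 ^ (2 * m) ^ 2, ?_⟩
  intro n l hl _ hm _
  subst hl
  exact numLeaves_main m l.length l le_rfl hm
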